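/- arXiv:1708.06174 — 3 statements merged into one kernel-verified Lean document; each statement's English description precedes it below -/
import Mathlib

section
/- Let Γ be a subgroup of SL(2,ℝ)^r (r ≥ 1) and let r_X > 0. Assume that for every γ = (γ₁,…,γ_r) ∈ Γ with γ ≠ 1, every index 1 ≤ j ≤ r, and every z in the upper half-plane ℍ, one has d_ℍ(z, γ_j·z) ≥ r_X. Then for every point (z₁,…,z_r) ∈ ℍ^r the family (∏_{j=1}^{r} exp(−2·d_ℍ(z_j, γ_j·z_j)))_{γ ∈ Γ} is summable and ∑_{γ ∈ Γ} ∏_{j=1}^{r} exp(−2·d_ℍ(z_j, γ_j·z_j)) ≤ (9 + 1/(4·sinh²(r_X/4)))^r. -/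
open Real UpperHalfPlane Matrix
open scoped MatrixGroups
open MeasureTheory intervalIntegral Set
open scoped ENNReal NNReal

lemma trig_integral (b R : ℝ) (hR : 0 < R) (hbR : R < b) :
    ∫ θ in (-(π/2))..(π/2), 2*R^2 * Real.cos θ^2 / (b + R*Real.sin θ)^2
      = 2*π*(b/Real.sqrt (b^2-R^2) - 1) := by
  have hb : 0 < b := hR.trans hbR
  have hpi := Real.pi_pos
  set s : ℝ := Real.sqrt (b^2 - R^2) with hs_def
  have hs2 : s^2 = b^2 - R^2 := Real.sq_sqrt (by nlinarith)
  have hs : 0 < s := Real.sqrt_pos.2 (by nlinarith)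
  set G : ℝ → ℝ := fun θ =>
    -2*θ + (4*b/s) * Real.arctan ((b * Real.tan (θ/2) + R)/s)
      - 2*R*(Real.cos θ/(b + R*Real.sin θ)) with hG_def
  have hderiv : ∀ θ ∈ Set.uIcc (-(π/2)) (π/2),
      HasDerivAt G (2*R^2 * Real.cos θ^2 / (b + R*Real.sin θ)^2) θ := by
    intro θ hθ
    rw [Set.uIcc_of_le (by linarith)] at hθ
    have hθ1 : -(π/2) ≤ θ := hθ.1
    have hθ2 : θ ≤ π/2 := hθ.2
    have hc2 : 0 < Real.cos (θ/2) :=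
      Real.cos_pos_of_mem_Ioo ⟨by linarith, by linarith⟩
    have hu : 0 < b + R*Real.sin θ := by nlinarith [Real.neg_one_le_sin θ]
    have htan : HasDerivAt (fun θ : ℝ => Real.tan (θ/2))
        (1 / Real.cos (θ/2)^2 * (1/2)) θ := by
      have h2 : HasDerivAt (fun θ : ℝ => θ/2) (1/2) θ := by
        simpa using (hasDerivAt_id θ).div_const 2
      exact (Real.hasDerivAt_tan hc2.ne').comp θ h2
    have hv : HasDerivAt (fun θ : ℝ => (b * Real.tan (θ/2) + R)/s)
        ((b * (1 / Real.cos (θ/2)^2 * (1/2)))/s) θ :=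
      ((htan.const_mul b).add_const R).div_const s
    have harc : HasDerivAt (fun θ : ℝ => Real.arctan ((b * Real.tan (θ/2) + R)/s))
        ((1/(1 + ((b * Real.tan (θ/2) + R)/s)^2)) * ((b * (1 / Real.cos (θ/2)^2 * (1/2)))/s)) θ :=
      (Real.hasDerivAt_arctan _).comp θ hv
    have hfrac : HasDerivAt (fun θ : ℝ => Real.cos θ/(b + R*Real.sin θ))
        ((-Real.sin θ * (b + R*Real.sin θ) - Real.cos θ * (R * Real.cos θ))
          / (b + R*Real.sin θ)^2) θ :=
      (Real.hasDerivAt_cos θ).div (((Real.hasDerivAt_sin θ).const_mul R).const_add b) hu.ne'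
    have hcomb := ((hasDerivAt_id θ).const_mul (-2) |>.add (harc.const_mul (4*b/s))).sub
      (hfrac.const_mul (2*R))
    refine hcomb.congr_deriv (Eq.symm ?_)
    have hsin : Real.sin θ = 2*Real.sin (θ/2)*Real.cos (θ/2) := by
      rw [← Real.sin_two_mul]; congr 1; ring
    have hpyth : Real.sin (θ/2)^2 + Real.cos (θ/2)^2 = 1 := Real.sin_sq_add_cos_sq _
    have key : 1 + ((b * Real.tan (θ/2) + R)/s)^2
        = b*(b + R*Real.sin θ)/(s^2 * Real.cos (θ/2)^2) := by
      rw [Real.tan_eq_sin_div_cos, hsin]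
      field_simp
      linear_combination (Real.cos (θ/2)^2) * hs2
        + (b^2) * hpyth
    rw [key]
    field_simp
    ring
  have hcont : IntervalIntegrable
      (fun θ => 2*R^2 * Real.cos θ^2 / (b + R*Real.sin θ)^2) volume (-(π/2)) (π/2) := by
    apply Continuous.intervalIntegrable
    apply Continuous.div (by continuity) (by continuity)
    intro θ
    have : 0 < b + R*Real.sin θ := by nlinarith [Real.neg_one_le_sin θ]
    positivity
  rw [intervalIntegral.integral_eq_sub_of_hasDerivAt hderiv hcont]
  have h1 : Real.tan ((π/2)/2) = 1 := by
    rw [show (π/2)/2 = π/4 by ring, Real.tan_pi_div_four]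
  have h2 : Real.tan ((-(π/2))/2) = -1 := by
    rw [show (-(π/2))/2 = -(π/4) by ring, Real.tan_neg, Real.tan_pi_div_four]
  have e1 : G (π/2) = -π + (4*b/s) * Real.arctan ((b+R)/s) := by
    simp only [hG_def, h1, Real.cos_pi_div_two, mul_one, zero_div, mul_zero, sub_zero]
    ring
  have e2 : G (-(π/2)) = π - (4*b/s) * Real.arctan ((b-R)/s) := by
    simp only [hG_def]
    rw [h2, Real.cos_neg, Real.cos_pi_div_two,
      show (b*(-1) + R)/s = -((b-R)/s) from by ring, Real.arctan_neg]
    ring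
  have hsum : Real.arctan ((b+R)/s) + Real.arctan ((b-R)/s) = π/2 := by
    have hx : 0 < (b + R)/s := by positivity
    have hinv : ((b+R)/s)⁻¹ = (b - R)/s := by
      rw [inv_div, div_eq_div_iff (by positivity) hs.ne']
      nlinarith [hs2]
    have h := Real.arctan_inv_of_pos hx
    rw [hinv] at h
    linarith
  rw [e1, e2]
  linear_combination (4*b/s) * hsum

noncomputable def hypMeasure : Measure ℂ :=
  volume.withDensity (fun w => ENNReal.ofReal (w.im⁻¹^2))

-- the slice set
lemma slice_set (a K : ℝ) :
    {x : ℝ | (x-a)^2 < K} = Set.Ioo (a - Real.sqrt K) (a + Real.sqrt K) := by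
  ext x
  simp only [Set.mem_setOf_eq, Set.mem_Ioo]
  constructor
  · intro hx
    have habs : |x-a| < Real.sqrt K := by
      rw [← Real.sqrt_sq_eq_abs]
      exact Real.sqrt_lt_sqrt (sq_nonneg _) hx
    rw [abs_lt] at habs
    constructor <;> linarith [habs.1, habs.2]
  · rintro ⟨h1, h2⟩
    by_cases hK : 0 ≤ K
    · have habs : |x-a| < Real.sqrt K := abs_lt.2 ⟨by linarith, by linarith⟩
      calc (x-a)^2 = |x-a|^2 := (sq_abs _).symm
        _ < Real.sqrt K ^ 2 := by
            exact pow_lt_pow_left₀ habs (abs_nonneg _) (by norm_num)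
        _ = K := Real.sq_sqrt hK
    · rw [Real.sqrt_eq_zero'.mpr (le_of_not_ge hK)] at h1 h2
      linarith

section diskArea
variable (a b R : ℝ)

noncomputable def sliceFun (y : ℝ) : ℝ := (y⁻¹)^2 * (2 * Real.sqrt (R^2 - (y-b)^2))

lemma sliceFun_cont (hR : 0 < R) (hRb : R < b) : Continuous (sliceFun b R) := by
  have hb : 0 < b := hR.trans hRb
  rw [continuous_iff_continuousAt]
  intro y
  rcases ne_or_eq y 0 with hy | hy
  · have h1 : ContinuousAt (fun y : ℝ => (y⁻¹)^2) y :=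
      ((continuousAt_id.inv₀ hy).pow 2)
    have h2 : Continuous (fun y : ℝ => 2 * Real.sqrt (R^2 - (y-b)^2)) := by
      apply Continuous.mul continuous_const
      exact Real.continuous_sqrt.comp (by continuity)
    exact h1.mul h2.continuousAt
  · subst hy
    have hmem : Set.Ioo (-(b-R)) (b-R) ∈ nhds (0:ℝ) :=
      Ioo_mem_nhds (by linarith) (by linarith)
    have hEq : ∀ x ∈ Set.Ioo (-(b-R)) (b-R), sliceFun b R x = 0 := by
      intro x hx
      have : R^2 - (x-b)^2 ≤ 0 := by
        simp only [Set.mem_Ioo] at hx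
        nlinarith [hx.1, hx.2]
      simp [sliceFun, Real.sqrt_eq_zero'.mpr this]
    have h0 : sliceFun b R 0 = 0 := by
      apply hEq; constructor <;> simp <;> linarith
    have hev : sliceFun b R =ᶠ[nhds 0] (fun _ => 0) := by
      filter_upwards [hmem] with x hx using hEq x hx
    exact (continuousAt_const (y := (0:ℝ))).congr hev.symm

lemma sliceFun_zero (hR : 0 < R) {y : ℝ} (hy : y ∉ Set.Ioc (b-R) (b+R)) :
    sliceFun b R y = 0 := by
  have : R^2 - (y-b)^2 ≤ 0 := by
    simp only [Set.mem_Ioc, not_and_or, not_lt, not_le] at hy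
    rcases hy with h | h <;> nlinarith
  simp [sliceFun, Real.sqrt_eq_zero'.mpr this]

lemma sliceFun_integral (hR : 0 < R) (hRb : R < b) :
    ∫ y, sliceFun b R y = 2*π*(b/Real.sqrt (b^2-R^2) - 1) := by
  have hb : 0 < b := hR.trans hRb
  have hsupp : HasCompactSupport (sliceFun b R) := by
    apply HasCompactSupport.intro (isCompact_Icc (a := b-R) (b := b+R))
    intro x hx
    apply sliceFun_zero b R hR
    simp only [Set.mem_Icc, not_and_or, not_le] at hx
    simp only [Set.mem_Ioc, not_and_or, not_lt, not_le]
    rcases hx with h | h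
    · left; linarith
    · right; linarith
  have hint : ∫ y, sliceFun b R y = ∫ y in Set.Ioc (b-R) (b+R), sliceFun b R y :=
    (setIntegral_eq_integral_of_forall_compl_eq_zero
      (fun x hx => sliceFun_zero b R hR hx)).symm
  rw [hint, ← intervalIntegral.integral_of_le (by linarith)]
  -- substitution y = b + R sin θ
  have hsub := intervalIntegral.integral_comp_smul_deriv
    (f := fun θ : ℝ => b + R * Real.sin θ) (f' := fun θ : ℝ => R * Real.cos θ)
    (g := sliceFun b R) (a := -(π/2)) (b := π/2)
    (fun θ _ => by
      simpa using ((Real.hasDerivAt_sin θ).const_mul R).const_add b)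
    (by fun_prop)
    (sliceFun_cont b R hR hRb)
  simp only [Real.sin_pi_div_two, Real.sin_neg, mul_one] at hsub
  rw [show b + R * -1 = b - R by ring] at hsub
  rw [← hsub, ← trig_integral b R hR hRb]
  apply intervalIntegral.integral_congr
  intro θ hθ
  rw [Set.uIcc_of_le (by linarith [Real.pi_pos])] at hθ
  have hcos : 0 ≤ Real.cos θ := Real.cos_nonneg_of_mem_Icc hθ
  have hu : 0 < b + R*Real.sin θ := by nlinarith [Real.neg_one_le_sin θ]
  simp only [Function.comp, sliceFun, smul_eq_mul]
  have hsq : R^2 - (b + R * Real.sin θ - b)^2 = (R * Real.cos θ)^2 := by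
    have := Real.sin_sq_add_cos_sq θ
    nlinarith [this]
  rw [hsq, Real.sqrt_sq (by positivity)]
  field_simp
end diskArea

lemma hypMeasure_ball (c : ℂ) (R : ℝ) (hR : 0 < R) (hRc : R < c.im) :
    hypMeasure (Metric.ball c R)
      = ENNReal.ofReal (2*π*(c.im/Real.sqrt (c.im^2-R^2) - 1)) := by
  classical
  have hb : 0 < c.im := hR.trans hRc
  rw [hypMeasure, withDensity_apply _ measurableSet_ball]
  rw [← lintegral_indicator measurableSet_ball]
  -- transfer to ℝ × ℝ
  have hmp : MeasurePreserving (Complex.measurableEquivRealProd.symm)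
      (volume : Measure (ℝ × ℝ)) (volume : Measure ℂ) :=
    Complex.volume_preserving_equiv_real_prod.symm
  have hmeas : Measurable (fun w : ℂ =>
      (Metric.ball c R).indicator (fun w : ℂ => ENNReal.ofReal (w.im⁻¹^2)) w) := by
    apply Measurable.indicator _ measurableSet_ball
    exact ((Complex.measurable_im.inv).pow_const 2).ennreal_ofReal
  rw [← hmp.lintegral_comp hmeas]
  have hind : ∀ p : ℝ × ℝ,
      (Metric.ball c R).indicator (fun w : ℂ => ENNReal.ofReal (w.im⁻¹^2))
        (Complex.measurableEquivRealProd.symm p)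
      = Set.indicator {q : ℝ × ℝ | (q.1 - c.re)^2 + (q.2 - c.im)^2 < R^2}
          (fun q => ENNReal.ofReal ((q.2)⁻¹^2)) p := by
    intro p
    have hmem : Complex.measurableEquivRealProd.symm p ∈ Metric.ball c R
        ↔ (p.1 - c.re)^2 + (p.2 - c.im)^2 < R^2 := by
      rw [Metric.mem_ball, Complex.dist_eq_re_im, Real.sqrt_lt' hR]
      simp [Complex.measurableEquivRealProd_symm_apply]
    rw [Set.indicator_apply, Set.indicator_apply]
    refine if_congr (by rw [Set.mem_setOf_eq]; exact hmem) ?_ rfl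
    simp [Complex.measurableEquivRealProd_symm_apply]
  simp only [hind]
  -- Tonelli
  have hSmeas : MeasurableSet {q : ℝ × ℝ | (q.1 - c.re)^2 + (q.2 - c.im)^2 < R^2} := by
    apply measurableSet_lt (by fun_prop) measurable_const
  have hfmeas : Measurable (fun q : ℝ × ℝ =>
      Set.indicator {q : ℝ × ℝ | (q.1 - c.re)^2 + (q.2 - c.im)^2 < R^2}
        (fun q => ENNReal.ofReal ((q.2)⁻¹^2)) q) :=
    Measurable.indicator ((measurable_snd.inv.pow_const 2).ennreal_ofReal) hSmeas
  rw [Measure.volume_eq_prod, lintegral_prod_symm' _ hfmeas]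
  -- inner integral
  have hinner : ∀ y : ℝ, (∫⁻ x : ℝ,
      Set.indicator {q : ℝ × ℝ | (q.1 - c.re)^2 + (q.2 - c.im)^2 < R^2}
        (fun q => ENNReal.ofReal ((q.2)⁻¹^2)) (x, y))
      = ENNReal.ofReal (sliceFun c.im R y) := by
    intro y
    have hset : ∀ x : ℝ, ((x, y) ∈ {q : ℝ × ℝ | (q.1 - c.re)^2 + (q.2 - c.im)^2 < R^2})
        ↔ x ∈ {x : ℝ | (x - c.re)^2 < R^2 - (y - c.im)^2} := by
      intro x; simp only [Set.mem_setOf_eq]; constructor <;> intro h <;> linarith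
    have hrw : ∀ x : ℝ, Set.indicator {q : ℝ × ℝ | (q.1 - c.re)^2 + (q.2 - c.im)^2 < R^2}
        (fun q => ENNReal.ofReal ((q.2)⁻¹^2)) (x, y)
        = Set.indicator {x : ℝ | (x - c.re)^2 < R^2 - (y - c.im)^2}
            (fun _ => ENNReal.ofReal ((y)⁻¹^2)) x := by
      intro x
      rw [Set.indicator_apply, Set.indicator_apply]
      exact if_congr (hset x) rfl rfl
    simp only [hrw]
    rw [lintegral_indicator_const (by rw [slice_set]; exact measurableSet_Ioo),
      slice_set, Real.volume_Ioo, sliceFun]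
    rw [← ENNReal.ofReal_mul (by positivity)]
    congr 1
    ring
  simp only [hinner]
  rw [← MeasureTheory.ofReal_integral_eq_lintegral_ofReal
    ((sliceFun_cont c.im R hR hRc).integrable_of_hasCompactSupport (by
      apply HasCompactSupport.intro (isCompact_Icc (a := c.im-R) (b := c.im+R))
      intro x hx
      apply sliceFun_zero c.im R hR
      simp only [Set.mem_Icc, not_and_or, not_le] at hx
      simp only [Set.mem_Ioc, not_and_or, not_lt, not_le]
      rcases hx with h | h
      · left; linarith
      · right; linarith))
    (Filter.Eventually.of_forall (fun y => by
      rw [sliceFun]; positivity))]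
  rw [sliceFun_integral c.im R hR hRc]



lemma hypMeasure_coe_ball (w : ℍ) (ρ : ℝ) (hρ : 0 < ρ) :
    hypMeasure (((↑) : ℍ → ℂ) '' (Metric.ball w ρ))
      = ENNReal.ofReal (2*π*(Real.cosh ρ - 1)) := by
  rw [UpperHalfPlane.image_coe_ball]
  have him : (↑(w.center ρ) : ℂ).im = w.im * Real.cosh ρ := by
    rw [UpperHalfPlane.coe_im, UpperHalfPlane.center_im]
  have hsinh : 0 < Real.sinh ρ := Real.sinh_pos_iff.mpr hρ
  have hcosh : 1 < Real.cosh ρ := Real.one_lt_cosh.mpr hρ.ne'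
  have him_pos : 0 < w.im := w.im_pos
  have hR : 0 < w.im * Real.sinh ρ := by positivity
  have hRc : w.im * Real.sinh ρ < (↑(w.center ρ) : ℂ).im := by
    rw [him]
    have : Real.sinh ρ < Real.cosh ρ := Real.sinh_lt_cosh ρ
    nlinarith
  rw [hypMeasure_ball _ _ hR hRc, him]
  congr 1
  have hsq : (w.im * Real.cosh ρ)^2 - (w.im * Real.sinh ρ)^2 = w.im^2 := by
    have := Real.cosh_sq_sub_sinh_sq ρ
    nlinarith
  rw [hsq, Real.sqrt_sq him_pos.le]
  field_simp

lemma packing (z : ℍ) (ρ t : ℝ) (hρ : 0 < ρ) (F : Finset ℍ)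
    (hsep : ∀ w ∈ F, ∀ w' ∈ F, w ≠ w' → 2*ρ ≤ dist w w')
    (hdist : ∀ w ∈ F, dist z w ≤ t) :
    (F.card : ℝ) * (Real.cosh ρ - 1) ≤ Real.cosh (t + ρ) - 1 := by
  rcases F.eq_empty_or_nonempty with hF | hF
  · simp only [hF, Finset.card_empty, Nat.cast_zero, zero_mul]
    linarith [Real.one_le_cosh (t + ρ)]
  have ht : 0 ≤ t := by
    obtain ⟨w, hw⟩ := hF
    exact dist_nonneg.trans (hdist w hw)
  have htρ : 0 < t + ρ := by linarith
  -- disjoint balls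
  have hdisj : (↑F : Set ℍ).PairwiseDisjoint
      (fun w => ((↑) : ℍ → ℂ) '' (Metric.ball w ρ)) := by
    intro w hw w' hw' hne
    rw [Function.onFun, Set.disjoint_left]
    rintro u ⟨v, hv, rfl⟩ ⟨v', hv', hvv'⟩
    have hv2 : v = v' := (UpperHalfPlane.ext hvv').symm
    subst hv2
    rw [Metric.mem_ball] at hv hv'
    have := hsep w hw w' hw' hne
    have h1 : dist w w' ≤ dist v w + dist v w' := dist_triangle_left w w' v
    linarith
  have hmeas : ∀ w ∈ F, MeasurableSet (((↑) : ℍ → ℂ) '' (Metric.ball w ρ)) := by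
    intro w _
    rw [UpperHalfPlane.image_coe_ball]
    exact measurableSet_ball
  have hsum := measure_biUnion_finset (μ := hypMeasure) hdisj hmeas
  have hsub : (⋃ w ∈ F, ((↑) : ℍ → ℂ) '' (Metric.ball w ρ))
      ⊆ ((↑) : ℍ → ℂ) '' (Metric.ball z (t + ρ)) := by
    intro u hu
    simp only [Set.mem_iUnion] at hu
    obtain ⟨w, hw, v, hv, rfl⟩ := hu
    refine ⟨v, ?_, rfl⟩
    rw [Metric.mem_ball] at hv ⊢
    have h1 : dist v z ≤ dist v w + dist w z := dist_triangle v w z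
    have h2 := hdist w hw
    rw [dist_comm w z] at h1
    linarith
  have hle := (hsum ▸ measure_mono hsub : _ ≤ hypMeasure (((↑) : ℍ → ℂ) '' (Metric.ball z (t+ρ))))
  rw [hypMeasure_coe_ball z _ htρ] at hle
  have hval : ∀ w ∈ F, hypMeasure (((↑) : ℍ → ℂ) '' (Metric.ball w ρ))
      = ENNReal.ofReal (2*π*(Real.cosh ρ - 1)) := fun w _ => hypMeasure_coe_ball w ρ hρ
  rw [Finset.sum_congr rfl hval, Finset.sum_const, nsmul_eq_mul] at hle
  have hcosh : 1 < Real.cosh ρ := Real.one_lt_cosh.mpr hρ.ne'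
  have hpi := Real.pi_pos
  have hcast : ((F.card : ℝ≥0∞) * ENNReal.ofReal (2*π*(Real.cosh ρ - 1)))
      = ENNReal.ofReal ((F.card : ℝ) * (2*π*(Real.cosh ρ - 1))) := by
    rw [← ENNReal.ofReal_natCast F.card, ← ENNReal.ofReal_mul (Nat.cast_nonneg _)]
  rw [hcast] at hle
  rw [ENNReal.ofReal_le_ofReal_iff (by nlinarith [Real.one_le_cosh (t+ρ)])] at hle
  nlinarith [hle]

lemma exp_neg_mul_integrableOn (k a : ℝ) (hk : 0 < k) :
    IntegrableOn (fun t : ℝ => Real.exp (-(k*t))) (Set.Ioi a) := by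
  have hderiv : ∀ x ∈ Set.Ici a, HasDerivAt (fun x : ℝ => -(Real.exp (-(k*x))/k))
      (Real.exp (-(k*x))) x := by
    intro x _
    have h1 : HasDerivAt (fun x : ℝ => -(k*x)) (-k) x := by
      have := ((hasDerivAt_id x).const_mul k).neg
      simp at this
      exact this
    have h2 := (Real.hasDerivAt_exp (-(k*x))).comp x h1
    have h3 := (h2.div_const k).neg
    refine h3.congr_deriv (Eq.symm ?_)
    field_simp
  have htend : Filter.Tendsto (fun x : ℝ => -(Real.exp (-(k*x))/k)) Filter.atTop (nhds 0) := by
    have h1 : Filter.Tendsto (fun x : ℝ => k*x) Filter.atTop Filter.atTop :=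
      Filter.Tendsto.const_mul_atTop hk Filter.tendsto_id
    have h2 : Filter.Tendsto (fun x : ℝ => Real.exp (-(k*x))) Filter.atTop (nhds 0) :=
      Real.tendsto_exp_neg_atTop_nhds_zero.comp h1
    have := (h2.div_const k).neg
    simpa using this
  exact integrableOn_Ioi_deriv_of_nonneg' hderiv (fun x _ => (Real.exp_pos _).le) htend

lemma exp_neg_mul_integral (k a : ℝ) (hk : 0 < k) :
    ∫ t in Set.Ioi a, Real.exp (-(k*t)) = Real.exp (-(k*a))/k := by
  have hderiv : ∀ x ∈ Set.Ici a, HasDerivAt (fun x : ℝ => -(Real.exp (-(k*x))/k))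
      (Real.exp (-(k*x))) x := by
    intro x _
    have h1 : HasDerivAt (fun x : ℝ => -(k*x)) (-k) x := by
      have := ((hasDerivAt_id x).const_mul k).neg
      simp at this
      exact this
    have h2 := (Real.hasDerivAt_exp (-(k*x))).comp x h1
    have h3 := (h2.div_const k).neg
    refine h3.congr_deriv (Eq.symm ?_)
    field_simp
  have htend : Filter.Tendsto (fun x : ℝ => -(Real.exp (-(k*x))/k)) Filter.atTop (nhds 0) := by
    have h1 : Filter.Tendsto (fun x : ℝ => k*x) Filter.atTop Filter.atTop :=
      Filter.Tendsto.const_mul_atTop hk Filter.tendsto_id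
    have h2 : Filter.Tendsto (fun x : ℝ => Real.exp (-(k*x))) Filter.atTop (nhds 0) :=
      Real.tendsto_exp_neg_atTop_nhds_zero.comp h1
    have := (h2.div_const k).neg
    simpa using this
  rw [integral_Ioi_of_hasDerivAt_of_nonneg' hderiv (fun x _ => (Real.exp_pos _).le) htend]
  ring

lemma sum_exp_le (z : ℍ) (rX : ℝ) (hrX : 0 < rX) (F : Finset ℍ)
    (hsep : ∀ w ∈ F, ∀ w' ∈ F, w ≠ w' → rX ≤ dist w w') :
    ∑ w ∈ F, Real.exp (-(2 * dist z w)) ≤ 9 + 1/(4*Real.sinh (rX/4)^2) := by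
  classical
  set ρ : ℝ := rX/2 with hρ_def
  have hρ : 0 < ρ := by positivity
  have hcoshρ : 1 < Real.cosh ρ := Real.one_lt_cosh.mpr hρ.ne'
  set g : ℝ → ℝ := fun t =>
    (Real.exp ρ * Real.exp (-(1*t)) + Real.exp (-ρ) * Real.exp (-(3*t))
      - 2*Real.exp (-(2*t))) / (Real.cosh ρ - 1) with hg_def
  set φ : ℍ → ℝ → ℝ := fun w =>
    Set.indicator (Set.Ioi (dist z w)) (fun t => 2*Real.exp (-(2*t))) with hφ_def
  have hbase : IntegrableOn (fun t : ℝ => 2*Real.exp (-(2*t))) (Set.Ioi (0:ℝ)) :=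
    (exp_neg_mul_integrableOn 2 0 two_pos).const_mul 2
  have hφint : ∀ w : ℍ, IntegrableOn (φ w) (Set.Ioi (0:ℝ)) := by
    intro w
    exact hbase.indicator measurableSet_Ioi
  have hterm : ∀ w ∈ F, Real.exp (-(2 * dist z w)) = ∫ t in Set.Ioi (0:ℝ), φ w t := by
    intro w _
    rw [hφ_def]
    rw [MeasureTheory.setIntegral_indicator measurableSet_Ioi]
    rw [Set.inter_eq_right.mpr (Set.Ioi_subset_Ioi dist_nonneg)]
    rw [MeasureTheory.integral_const_mul, exp_neg_mul_integral 2 (dist z w) two_pos]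
    ring
  rw [Finset.sum_congr rfl hterm, ← MeasureTheory.integral_finset_sum _ (fun w _ => hφint w)]
  have hnum : IntegrableOn (fun t : ℝ => Real.exp ρ * Real.exp (-(1*t))
      + Real.exp (-ρ) * Real.exp (-(3*t)) - 2*Real.exp (-(2*t))) (Set.Ioi (0:ℝ)) :=
    (((exp_neg_mul_integrableOn 1 0 one_pos).const_mul (Real.exp ρ)).add
      ((exp_neg_mul_integrableOn 3 0 (by norm_num)).const_mul (Real.exp (-ρ)))).sub
      ((exp_neg_mul_integrableOn 2 0 two_pos).const_mul 2)
  have hgint : IntegrableOn g (Set.Ioi (0:ℝ)) := hnum.div_const _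
  have hid : ∀ t : ℝ, 2*Real.exp (-(2*t)) * (Real.cosh (t+ρ) - 1)
      = Real.exp ρ * Real.exp (-(1*t)) + Real.exp (-ρ) * Real.exp (-(3*t))
        - 2*Real.exp (-(2*t)) := by
    intro t
    have e1 : Real.exp ρ * Real.exp (-(1*t)) = Real.exp (-(2*t)) * Real.exp (t+ρ) := by
      rw [← Real.exp_add, ← Real.exp_add]; congr 1; ring
    have e2 : Real.exp (-ρ) * Real.exp (-(3*t)) = Real.exp (-(2*t)) * Real.exp (-(t+ρ)) := by
      rw [← Real.exp_add, ← Real.exp_add]; congr 1; ring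
    rw [Real.cosh_eq, e1, e2]; ring
  have hmono : ∫ t in Set.Ioi (0:ℝ), (∑ w ∈ F, φ w t) ≤ ∫ t in Set.Ioi (0:ℝ), g t := by
    apply MeasureTheory.setIntegral_mono_on
      (MeasureTheory.integrable_finset_sum _ (fun w _ => hφint w)) hgint measurableSet_Ioi
    intro t ht
    rw [Set.mem_Ioi] at ht
    have hLHS : ∑ w ∈ F, φ w t
        = ((F.filter (fun w => dist z w < t)).card : ℝ) * (2*Real.exp (-(2*t))) := by
      have hφval : ∀ w : ℍ, φ w t = if dist z w < t then 2*Real.exp (-(2*t)) else 0 := by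
        intro w; rw [hφ_def]; simp [Set.indicator_apply, Set.mem_Ioi]
      simp only [hφval]
      rw [Finset.sum_ite, Finset.sum_const, Finset.sum_const_zero, add_zero, nsmul_eq_mul]
    have hcard := packing z ρ t hρ (F.filter (fun w => dist z w < t))
      (fun w hw w' hw' hne => by
        have h := hsep w (Finset.mem_filter.mp hw).1 w' (Finset.mem_filter.mp hw').1 hne
        rw [hρ_def]; linarith)
      (fun w hw => ((Finset.mem_filter.mp hw).2).le)
    have he : (0:ℝ) < 2*Real.exp (-(2*t)) := by positivity
    have h2 : ((F.filter (fun w => dist z w < t)).card : ℝ)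
        ≤ (Real.cosh (t+ρ) - 1)/(Real.cosh ρ - 1) := by
      rw [le_div_iff₀ (by linarith)]
      exact hcard
    rw [hLHS]
    calc ((F.filter (fun w => dist z w < t)).card : ℝ) * (2*Real.exp (-(2*t)))
        ≤ ((Real.cosh (t+ρ) - 1)/(Real.cosh ρ - 1)) * (2*Real.exp (-(2*t))) :=
          mul_le_mul_of_nonneg_right h2 he.le
      _ = g t := by
          rw [hg_def, div_mul_eq_mul_div]
          congr 1
          rw [mul_comm, hid t]
  have hint : ∫ t in Set.Ioi (0:ℝ), g t
      = (Real.exp ρ + Real.exp (-ρ)/3 - 1)/(Real.cosh ρ - 1) := by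
    rw [hg_def]
    rw [MeasureTheory.integral_div]
    congr 1
    have hA : IntegrableOn (fun t : ℝ => Real.exp ρ * Real.exp (-(1*t))
        + Real.exp (-ρ) * Real.exp (-(3*t))) (Set.Ioi (0:ℝ)) := by
      exact ((exp_neg_mul_integrableOn 1 0 one_pos).const_mul (Real.exp ρ)).add
        ((exp_neg_mul_integrableOn 3 0 (by norm_num)).const_mul (Real.exp (-ρ)))
    have hC : IntegrableOn (fun t : ℝ => 2*Real.exp (-(2*t))) (Set.Ioi (0:ℝ)) := by
      exact (exp_neg_mul_integrableOn 2 0 two_pos).const_mul 2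
    have hA1 : IntegrableOn (fun t : ℝ => Real.exp ρ * Real.exp (-(1*t))) (Set.Ioi (0:ℝ)) := by
      exact (exp_neg_mul_integrableOn 1 0 one_pos).const_mul (Real.exp ρ)
    have hA2 : IntegrableOn (fun t : ℝ => Real.exp (-ρ) * Real.exp (-(3*t))) (Set.Ioi (0:ℝ)) := by
      exact (exp_neg_mul_integrableOn 3 0 (by norm_num)).const_mul (Real.exp (-ρ))
    rw [MeasureTheory.integral_sub hA hC, MeasureTheory.integral_add hA1 hA2,
      MeasureTheory.integral_const_mul, MeasureTheory.integral_const_mul,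
      MeasureTheory.integral_const_mul]
    rw [exp_neg_mul_integral 1 0 one_pos, exp_neg_mul_integral 3 0 (by norm_num),
      exp_neg_mul_integral 2 0 two_pos]
    norm_num
    ring
  rw [hint] at hmono
  refine hmono.trans ?_
  -- final algebra
  have hs : 0 < Real.sinh (rX/4) := Real.sinh_pos_iff.mpr (by positivity)
  have hhalf : Real.cosh ρ - 1 = 2*Real.sinh (rX/4)^2 := by
    have h1 : Real.cosh (2*(rX/4)) = Real.cosh (rX/4)^2 + Real.sinh (rX/4)^2 :=
      Real.cosh_two_mul _
    have h2 : Real.cosh (rX/4)^2 = Real.sinh (rX/4)^2 + 1 := Real.cosh_sq _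
    have h3 : (2:ℝ)*(rX/4) = ρ := by rw [hρ_def]; ring
    rw [← h3]
    linarith
  have hexp1 : Real.exp ρ * Real.exp (-ρ) = 1 := by
    rw [← Real.exp_add]; simp
  have hcosh_eq : Real.cosh ρ = (Real.exp ρ + Real.exp (-ρ))/2 := Real.cosh_eq ρ
  rw [div_le_iff₀ (by linarith)]
  have hkey : 0 ≤ 21*(Real.exp ρ)^2 - 45*(Real.exp ρ) + 25 := by
    nlinarith [sq_nonneg (42*Real.exp ρ - 45)]
  have hepos := Real.exp_pos ρ
  have henegpos := Real.exp_pos (-ρ)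
  have hkey2 : 0 ≤ 21*Real.exp ρ + 25*Real.exp (-ρ) - 45 := by
    nlinarith [mul_nonneg hkey henegpos.le, hexp1, hepos]
  have hexpand : (9 + 1/(4*Real.sinh (rX/4)^2)) * (Real.cosh ρ - 1)
      = 18*Real.sinh (rX/4)^2 + 1/2 := by
    rw [hhalf]
    field_simp
    ring
  rw [hexpand]
  linarith [hkey2, hhalf, hcosh_eq]

/-- Let `Γ` be a subgroup of `SL(2, ℝ)^r` (`r ≥ 1`) such that for every `γ ∈ Γ` with `γ ≠ 1`,
every component `γ_j` displaces every point of `ℍ` by at least `r_X > 0`. Then for every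
`(z₁, …, z_r) ∈ ℍ^r` the family `γ ↦ ∏_j exp(−2·d(z_j, γ_j z_j))` is summable over `Γ`, with
sum at most `(9 + 1/(4·sinh²(r_X/4)))^r`. -/
theorem sum_prod_exp_neg_two_dist_le (r : ℕ) (hr : 1 ≤ r)
    (Γ : Subgroup (Π _ : Fin r, SL(2, ℝ))) (rX : ℝ) (hrX : 0 < rX)
    (hdisp : ∀ γ ∈ Γ, γ ≠ 1 → ∀ j : Fin r, ∀ z : ℍ, rX ≤ dist z (γ j • z))
    (z : Fin r → ℍ) :
    Summable (fun γ : Γ =>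
        ∏ j : Fin r, Real.exp (-2 * dist (z j) ((γ : Π _ : Fin r, SL(2, ℝ)) j • z j))) ∧
      ∑' γ : Γ, ∏ j : Fin r,
          Real.exp (-2 * dist (z j) ((γ : Π _ : Fin r, SL(2, ℝ)) j • z j)) ≤
        (9 + 1 / (4 * Real.sinh (rX / 4) ^ 2)) ^ r := by
  classical
  have hs : 0 < Real.sinh (rX/4) := Real.sinh_pos_iff.mpr (by positivity)
  have hC1 : (1:ℝ) ≤ 9 + 1 / (4 * Real.sinh (rX / 4) ^ 2) := by
    have : 0 < 1 / (4 * Real.sinh (rX/4)^2) := by positivity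
    linarith
  set j0 : Fin r := ⟨0, hr⟩ with hj0
  set f : Γ → ℝ := fun γ =>
    ∏ j : Fin r, Real.exp (-2 * dist (z j) ((γ : Π _ : Fin r, SL(2, ℝ)) j • z j)) with hf_def
  have hf0 : 0 ≤ f := fun γ => Finset.prod_nonneg (fun j _ => (Real.exp_pos _).le)
  -- separation of orbit points
  have hsep : ∀ γ γ' : Γ, γ ≠ γ' → ∀ j : Fin r,
      rX ≤ dist ((γ : Π _ : Fin r, SL(2, ℝ)) j • z j)
        ((γ' : Π _ : Fin r, SL(2, ℝ)) j • z j) := by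
    intro γ γ' hne j
    have hgmem : ((γ'⁻¹ * γ : Γ) : Π _ : Fin r, SL(2, ℝ)) ∈ Γ := (γ'⁻¹ * γ).2
    have hgne : ((γ'⁻¹ * γ : Γ) : Π _ : Fin r, SL(2, ℝ)) ≠ 1 := by
      intro h
      apply hne
      have h2 : (γ'⁻¹ * γ : Γ) = 1 := by
        apply Subtype.ext
        simpa using h
      have := inv_mul_eq_one.mp h2
      exact this.symm
    have h := hdisp _ hgmem hgne j (z j)
    have hcoe : ((γ'⁻¹ * γ : Γ) : Π _ : Fin r, SL(2, ℝ)) j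
        = ((γ' : Π _ : Fin r, SL(2, ℝ)) j)⁻¹ * (γ : Π _ : Fin r, SL(2, ℝ)) j := by
      simp [Pi.mul_apply, Pi.inv_apply]
    rw [hcoe] at h
    have heq : dist ((γ : Π _ : Fin r, SL(2, ℝ)) j • z j)
        ((γ' : Π _ : Fin r, SL(2, ℝ)) j • z j)
        = dist (z j) ((((γ' : Π _ : Fin r, SL(2, ℝ)) j)⁻¹
            * (γ : Π _ : Fin r, SL(2, ℝ)) j) • z j) := by
      rw [← dist_smul ((γ' : Π _ : Fin r, SL(2, ℝ)) j) (z j)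
        ((((γ' : Π _ : Fin r, SL(2, ℝ)) j)⁻¹ * (γ : Π _ : Fin r, SL(2, ℝ)) j) • z j),
        smul_smul, mul_inv_cancel_left, dist_comm]
    rw [heq]
    exact h
  -- bound on finite sums
  have hbound : ∀ u : Finset Γ, ∑ γ ∈ u, f γ ≤ (9 + 1 / (4 * Real.sinh (rX / 4) ^ 2)) ^ r := by
    intro u
    have hstep : ∀ γ ∈ u, f γ
        ≤ Real.exp (-(2 * dist (z j0) ((γ : Π _ : Fin r, SL(2, ℝ)) j0 • z j0))) := by
      intro γ _
      rw [hf_def]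
      simp only [neg_mul]
      rw [← Finset.prod_erase_mul Finset.univ _ (Finset.mem_univ j0)]
      apply mul_le_of_le_one_left (Real.exp_pos _).le
      apply Finset.prod_le_one
      · intro j _; exact (Real.exp_pos _).le
      · intro j _
        rw [Real.exp_le_one_iff]
        have := dist_nonneg (x := z j) (y := (γ : Π _ : Fin r, SL(2, ℝ)) j • z j)
        linarith
    have himg : ∀ x ∈ u, ∀ y ∈ u,
        (fun γ : Γ => (γ : Π _ : Fin r, SL(2, ℝ)) j0 • z j0) x
          = (fun γ : Γ => (γ : Π _ : Fin r, SL(2, ℝ)) j0 • z j0) y → x = y := by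
      intro x _ y _ hxy
      by_contra hne
      have h1 := hsep x y hne j0
      have hxy' : ((x : Π _ : Fin r, SL(2, ℝ)) j0 • z j0 : ℍ)
          = (y : Π _ : Fin r, SL(2, ℝ)) j0 • z j0 := hxy
      rw [hxy', dist_self] at h1
      linarith
    calc ∑ γ ∈ u, f γ
        ≤ ∑ γ ∈ u, Real.exp (-(2 * dist (z j0)
            ((γ : Π _ : Fin r, SL(2, ℝ)) j0 • z j0))) := Finset.sum_le_sum hstep
      _ = ∑ w ∈ u.image (fun γ : Γ => (γ : Π _ : Fin r, SL(2, ℝ)) j0 • z j0),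
            Real.exp (-(2 * dist (z j0) w)) := by rw [Finset.sum_image himg]
      _ ≤ 9 + 1 / (4 * Real.sinh (rX / 4) ^ 2) := by
          apply sum_exp_le (z j0) rX hrX
          intro w hw w' hw' hne
          obtain ⟨γ, hγ, rfl⟩ := Finset.mem_image.mp hw
          obtain ⟨γ', hγ', rfl⟩ := Finset.mem_image.mp hw'
          exact hsep γ γ' (fun h => hne (by rw [h])) j0
      _ ≤ (9 + 1 / (4 * Real.sinh (rX / 4) ^ 2)) ^ r :=
          le_self_pow₀ hC1 (by omega)
  have hsummable : Summable f := summable_of_sum_le hf0 hbound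
  exact ⟨hsummable, Summable.tsum_le_of_sum_le hsummable hbound⟩
end

section
/- For every real number r > 0, one has e^{−3r/2} · sinh(r/2) · sinh(r) / sinh²(r/4) ≤ 8. -/
open Real

lemma my_cosh_le_exp {x : ℝ} (hx : 0 ≤ x) : Real.cosh x ≤ Real.exp x := by
  rw [Real.cosh_eq]
  have : Real.exp (-x) ≤ Real.exp x := Real.exp_le_exp.2 (by linarith)
  linarith

/-- For every real number `r > 0`,
`e^{−3r/2} · sinh(r/2) · sinh(r) / sinh²(r/4) ≤ 8`. -/
theorem boundary_term_bound (r : ℝ) (hr : 0 < r) :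
    Real.exp (-(3 * r) / 2) * Real.sinh (r / 2) * Real.sinh r / (Real.sinh (r / 4)) ^ 2 ≤ 8 := by
  have ht : 0 < r / 4 := by linarith
  have hs : 0 < Real.sinh (r / 4) := by positivity
  rw [div_le_iff₀ (by positivity)]
  have h1 : Real.sinh (r / 2) = 2 * Real.sinh (r / 4) * Real.cosh (r / 4) := by
    rw [← Real.sinh_two_mul]; ring_nf
  have h2 : Real.sinh r = 2 * Real.sinh (r / 2) * Real.cosh (r / 2) := by
    rw [← Real.sinh_two_mul]; ring_nf
  have hc1 : Real.cosh (r / 4) ≤ Real.exp (r / 4) := my_cosh_le_exp (le_of_lt ht)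
  have hc2 : Real.cosh (r / 2) ≤ Real.exp (r / 2) := my_cosh_le_exp (by linarith)
  have hc1p : 0 < Real.cosh (r / 4) := Real.cosh_pos _
  have hc2p : 0 < Real.cosh (r / 2) := Real.cosh_pos _
  have hep : 0 < Real.exp (-(3 * r) / 2) := Real.exp_pos _
  have key : Real.exp (-(3 * r) / 2) * Real.exp (r / 4) ^ 2 * Real.exp (r / 2) ≤ 1 := by
    have heq : Real.exp (-(3 * r) / 2) * Real.exp (r / 4) ^ 2 * Real.exp (r / 2)
        = Real.exp (-(r / 2)) := by
      rw [sq, ← Real.exp_add, ← Real.exp_add, ← Real.exp_add]; ring_nf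
    rw [heq]
    exact Real.exp_le_one_iff.2 (by linarith)
  have hmain : Real.exp (-(3 * r) / 2) * Real.cosh (r / 4) ^ 2 * Real.cosh (r / 2) ≤ 1 := by
    calc Real.exp (-(3 * r) / 2) * Real.cosh (r / 4) ^ 2 * Real.cosh (r / 2)
        ≤ Real.exp (-(3 * r) / 2) * Real.exp (r / 4) ^ 2 * Real.exp (r / 2) := by
          apply mul_le_mul _ hc2 hc2p.le (by positivity)
          exact mul_le_mul le_rfl (pow_le_pow_left₀ hc1p.le hc1 2) (by positivity) hep.le
      _ ≤ 1 := key
  rw [h2, h1]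
  nlinarith [mul_le_mul_of_nonneg_left hmain
    (by positivity : (0:ℝ) ≤ 8 * Real.sinh (r / 4) ^ 2)]
end

section
/- Let F be a totally real number field of degree d with real embeddings σ₁,…,σ_d : F → ℝ and unit group O_F^× of its ring of integers. Then the family ( ∏_{j=1}^{d} (1 + σ_j(ε)²)^{−1} )_{ε ∈ O_F^×} is summable, i.e. the series ∑_{ε ∈ O_F^×} ∏_{j=1}^{d} (1 + σ_j(ε)²)^{−1} converges. -/
open NumberField

private lemma summable_int_exp_aux (a : ℝ) (ha : 0 < a) :
    Summable fun m : ℤ => Real.exp (-a * |(m : ℝ)|) := by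
  apply Summable.of_nat_of_neg <;>
  · simp only [Int.cast_natCast, Int.cast_neg, abs_neg, Nat.abs_cast]
    have : ∀ k : ℕ, Real.exp (-a * (k:ℝ)) = Real.exp ((k:ℝ) * (-a)) := by intro k; ring_nf
    simp only [this]
    exact Real.summable_exp_nat_mul_iff.mpr (by linarith)

private lemma summable_pi_exp_aux (r : ℕ) (a : ℝ) (ha : 0 < a) :
    Summable fun n : Fin r → ℤ => Real.exp (-a * ∑ i, |(n i : ℝ)|) := by
  induction r with
  | zero => exact .of_finite
  | succ r ih =>
    have h := (summable_int_exp_aux a ha).mul_of_nonneg ih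
      (fun _ => (Real.exp_pos _).le) (fun _ => (Real.exp_pos _).le)
    have key : Summable ((fun n : Fin (r+1) → ℤ => Real.exp (-a * ∑ i, |(n i : ℝ)|)) ∘
        (Fin.consEquiv fun _ : Fin (r+1) => ℤ)) := by
      refine h.congr fun n => ?_
      simp only [Function.comp, Fin.consEquiv_apply,
        Fin.sum_univ_succ, Fin.cons_zero, Fin.cons_succ]
      rw [mul_add, neg_mul, neg_mul, ← Real.exp_add]
      try ring_nf
    exact (Fin.consEquiv fun _ : Fin (r+1) => ℤ).summable_iff.mp key

private lemma place_bound_aux (F : Type) [Field F] [NumberField F] (d : ℕ)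
    (σ : Fin d → (F →+* ℝ)) (x : F)
    (hx0 : ∀ j, σ j x ≠ 0) (hnorm : ∏ j, (σ j x)^2 = 1)
    (w : InfinitePlace F) (j : Fin d) (hwj : ∀ y : F, w y = |σ j y|) :
    Real.exp (2 * |Real.log (w x)|) ≤ ∏ i, (1 + (σ i x)^2) := by
  have hfac : ∀ i : Fin d, (1:ℝ) ≤ 1 + (σ i x)^2 := fun i => by nlinarith [sq_nonneg (σ i x)]
  have hone : ∀ s : Finset (Fin d), (1:ℝ) ≤ ∏ i ∈ s, (1 + (σ i x)^2) := fun s => by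
    have := Finset.prod_le_prod (s := s) (f := fun _ => (1:ℝ)) (g := fun i => 1 + (σ i x)^2)
      (fun i _ => zero_le_one) (fun i _ => hfac i)
    simpa using this
  have hsplit : (1 + (σ j x)^2) * ∏ i ∈ Finset.univ.erase j, (1 + (σ i x)^2)
      = ∏ i, (1 + (σ i x)^2) :=
    Finset.mul_prod_erase _ (fun i => 1 + (σ i x)^2) (Finset.mem_univ j)
  have hQ1 : (1:ℝ) ≤ ∏ i ∈ Finset.univ.erase j, (1 + (σ i x)^2) := hone _
  have hP1 : (1:ℝ) ≤ ∏ i, (1 + (σ i x)^2) := hone _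
  have hP0 : (0:ℝ) < ∏ i, (1 + (σ i x)^2) := lt_of_lt_of_le one_pos hP1
  have hy0 : 0 < (σ j x)^2 := by
    rw [← sq_abs]; exact pow_pos (abs_pos.mpr (hx0 j)) 2
  have h1 : (σ j x)^2 ≤ ∏ i, (1 + (σ i x)^2) := by
    nlinarith [hsplit, hQ1, hy0]
  have h2 : ((σ j x)^2)⁻¹ ≤ ∏ i, (1 + (σ i x)^2) := by
    have he : (∏ i ∈ Finset.univ.erase j, (σ i x)^2) * (σ j x)^2 = 1 := by
      rw [Finset.prod_erase_mul _ _ (Finset.mem_univ j)]; exact hnorm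
    have heq : ∏ i ∈ Finset.univ.erase j, (σ i x)^2 = ((σ j x)^2)⁻¹ :=
      eq_inv_of_mul_eq_one_left he
    have hle : ∏ i ∈ Finset.univ.erase j, (σ i x)^2
        ≤ ∏ i ∈ Finset.univ.erase j, (1 + (σ i x)^2) :=
      Finset.prod_le_prod (fun i _ => sq_nonneg _) (fun i _ => by nlinarith [sq_nonneg (σ i x)])
    rw [← heq]
    nlinarith [hsplit, hQ1, hle, hy0]
  have hlog : |Real.log ((σ j x)^2)| ≤ Real.log (∏ i, (1 + (σ i x)^2)) := by
    rw [abs_le]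
    constructor
    · have h3 := Real.log_le_log (by positivity) h2
      rw [Real.log_inv] at h3
      linarith
    · exact Real.log_le_log hy0 h1
  have hly : Real.log ((σ j x)^2) = 2 * Real.log (w x) := by
    rw [hwj x, Real.log_pow, Real.log_abs]
    norm_num
  have habs : 2 * |Real.log (w x)| = |Real.log ((σ j x)^2)| := by
    rw [hly, abs_mul]; norm_num
  rw [habs, ← Real.exp_log hP0]
  exact Real.exp_le_exp.mpr hlog

open NumberField.Units NumberField.Units.dirichletUnitTheorem Finset in
/-- Let `F` be a totally real number field of degree `d`, with distinct real embeddings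
`σ₁, …, σ_d`. The family `ε ↦ ∏_j (1 + σ_j(ε)²)⁻¹`, indexed by the unit group `(𝓞 F)ˣ`,
is summable. -/
theorem summable_units_prod (F : Type) [Field F] [NumberField F]
    (htr : ∀ v : InfinitePlace F, v.IsReal)
    (d : ℕ) (hd : d = Module.finrank ℚ F)
    (σ : Fin d → (F →+* ℝ)) (hσ : Function.Injective σ) :
    Summable fun ε : (𝓞 F)ˣ =>
      ∏ j : Fin d, (1 + (σ j ((ε : 𝓞 F) : F)) ^ 2)⁻¹ := by
  classical
  -- the complexified embeddings are all the embeddings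
  have hbij : Function.Bijective (fun j => Complex.ofRealHom.comp (σ j) : Fin d → (F →+* ℂ)) := by
    rw [Fintype.bijective_iff_injective_and_card]
    constructor
    · intro j k h
      apply hσ
      ext x
      have := congrArg (fun f : F →+* ℂ => f x) h
      simpa [Complex.ofReal_inj] using this
    · rw [Fintype.card_fin, NumberField.Embeddings.card F ℂ, hd]
  -- units are nonzero under each embedding
  have hx0 : ∀ (ε : (𝓞 F)ˣ) (j : Fin d), σ j ((ε : 𝓞 F) : F) ≠ 0 := by
    intro ε j
    have h1 : ((ε : 𝓞 F) : F) ≠ 0 := by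
      simpa using (map_ne_zero (algebraMap (𝓞 F) F)).mpr ε.ne_zero
    exact fun h => h1 ((map_eq_zero (σ j)).mp h)
  -- the product formula for units
  have hnorm : ∀ ε : (𝓞 F)ˣ, ∏ j, (σ j ((ε : 𝓞 F) : F))^2 = 1 := by
    intro ε
    set x : F := ((ε : 𝓞 F) : F)
    have h1 : algebraMap ℚ ℂ (Algebra.norm ℚ x) = ∏ φ : F →ₐ[ℚ] ℂ, φ x :=
      Algebra.norm_eq_prod_embeddings ℚ ℂ x
    have h2 : ∏ φ : F →ₐ[ℚ] ℂ, φ x = ∏ ψ : F →+* ℂ, ψ x := by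
      rw [← Fintype.prod_equiv (RingHom.equivRatAlgHom F ℂ) (fun ψ => ψ x) (fun φ => φ x)
        (fun ψ => rfl)]
    have h3 : ∏ ψ : F →+* ℂ, ψ x = ∏ j, Complex.ofRealHom.comp (σ j) x :=
      (Fintype.prod_bijective _ hbij _ _ (fun j => rfl)).symm
    have h4 : ((∏ j, σ j x : ℝ) : ℂ) = algebraMap ℚ ℂ (Algebra.norm ℚ x) := by
      rw [h1, h2, h3]
      push_cast
      rfl
    have h5 : ∏ j, σ j x = (Algebra.norm ℚ x : ℝ) := by
      rw [show (algebraMap ℚ ℂ) (Algebra.norm ℚ x) = (((Algebra.norm ℚ x : ℝ)) : ℂ) by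
        push_cast; rfl] at h4
      exact_mod_cast h4
    have h6 : |Algebra.norm ℚ x| = 1 := Units.norm F ε
    have key : (∏ j, σ j x) ^ 2 = 1 := by
      rw [h5, ← sq_abs, ← Rat.cast_abs, h6]; norm_num
    rw [← Finset.prod_pow] at key
    exact key
  -- each infinite place comes from one of the σ's
  have hplace : ∀ w : InfinitePlace F, ∃ j, ∀ x : F, w x = |σ j x| := by
    intro w
    obtain ⟨j, hj⟩ := hbij.2 w.embedding
    refine ⟨j, fun x => ?_⟩
    rw [← InfinitePlace.norm_embedding_eq, ← hj]
    simp [Complex.norm_real, Real.norm_eq_abs]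
  -- notation
  set f : (𝓞 F)ˣ → ℝ := fun ε => ∏ j : Fin d, (1 + (σ j ((ε : 𝓞 F) : F)) ^ 2)⁻¹ with hf
  have hf0 : ∀ ε, 0 ≤ f ε := fun ε =>
    Finset.prod_nonneg fun j _ => inv_nonneg.mpr (by positivity)
  -- the key pointwise bound via the log embedding
  have hbound : ∀ ε : (𝓞 F)ˣ,
      f ε ≤ Real.exp (-(2 * ‖logEmbedding F (Additive.ofMul ε)‖)) := by
    intro ε
    set x : F := ((ε : 𝓞 F) : F)
    have hfac : ∀ i : Fin d, (1:ℝ) ≤ 1 + (σ i x)^2 := fun i => by nlinarith [sq_nonneg (σ i x)]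
    have hP1 : (1:ℝ) ≤ ∏ i, (1 + (σ i x)^2) := by
      have := Finset.prod_le_prod (s := Finset.univ) (f := fun _ : Fin d => (1:ℝ))
        (g := fun i => 1 + (σ i x)^2) (fun i _ => zero_le_one) (fun i _ => hfac i)
      simpa using this
    have hP0 : (0:ℝ) < ∏ i, (1 + (σ i x)^2) := lt_of_lt_of_le one_pos hP1
    have hcoord : ∀ w' : {w : InfinitePlace F // w ≠ w₀},
        ‖logEmbedding F (Additive.ofMul ε) w'‖ ≤ Real.log (∏ i, (1 + (σ i x)^2)) / 2 := by
      intro w'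
      obtain ⟨j, hj⟩ := hplace w'.1
      have hexp := place_bound_aux F d σ x (hx0 ε) (hnorm ε) w'.1 j hj
      have h2l : 2 * |Real.log (w'.1 x)| ≤ Real.log (∏ i, (1 + (σ i x)^2)) :=
        (Real.le_log_iff_exp_le hP0).mpr hexp
      have hmult : (InfinitePlace.mult w'.1 : ℝ) = 1 := by
        simp [InfinitePlace.mult, htr w'.1]
      rw [logEmbedding_component, Real.norm_eq_abs, abs_mul, hmult]
      rw [abs_one, one_mul]
      linarith [abs_nonneg (Real.log (w'.1 x))]
    have hnn : 0 ≤ Real.log (∏ i, (1 + (σ i x)^2)) / 2 := by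
      have := Real.log_nonneg hP1
      linarith
    have hnorm_le : ‖logEmbedding F (Additive.ofMul ε)‖
        ≤ Real.log (∏ i, (1 + (σ i x)^2)) / 2 :=
      (pi_norm_le_iff_of_nonneg hnn).mpr hcoord
    have hexp_le : Real.exp (2 * ‖logEmbedding F (Additive.ofMul ε)‖)
        ≤ ∏ i, (1 + (σ i x)^2) := by
      rw [← Real.exp_log hP0]
      exact Real.exp_le_exp.mpr (by linarith)
    have hfP : f ε = (∏ i, (1 + (σ i x)^2))⁻¹ := by
      rw [hf]; exact Finset.prod_inv_distrib _
    rw [hfP, Real.exp_neg]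
    exact inv_anti₀ (Real.exp_pos _) hexp_le
  -- the decomposition of units
  set r := rank F with hr
  let Φ : torsion F × (Fin r → ℤ) → (𝓞 F)ˣ :=
    fun p => (p.1 : (𝓞 F)ˣ) * ∏ i, fundSystem F i ^ (p.2 i)
  have hΦbij : Function.Bijective Φ := by
    constructor
    · intro p q h
      obtain ⟨z, _, hz⟩ := exist_unique_eq_mul_prod F (Φ p)
      exact (hz p rfl).trans (hz q h).symm
    · intro x
      obtain ⟨p, hp, _⟩ := exist_unique_eq_mul_prod F x
      exact ⟨p, hp.symm⟩
  let e := Equiv.ofBijective Φ hΦbij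
  rw [← e.summable_iff]
  -- the log embedding of Φ (ζ, n)
  set B := (basisUnitLattice F).ofZLatticeBasis ℝ (unitLattice F) with hB
  have hlogΦ : ∀ (ζ : torsion F) (n : Fin r → ℤ),
      logEmbedding F (Additive.ofMul (Φ (ζ, n))) = ∑ i, (n i : ℝ) • B i := by
    intro ζ n
    have h0 : logEmbedding F (Additive.ofMul (ζ : (𝓞 F)ˣ)) = 0 :=
      (logEmbedding_eq_zero_iff).mpr ζ.2
    show logEmbedding F (Additive.ofMul ((ζ : (𝓞 F)ˣ) * ∏ i, fundSystem F i ^ (n i))) = _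
    rw [ofMul_mul, map_add, h0, zero_add]
    have h1 : Additive.ofMul (∏ i, fundSystem F i ^ (n i))
        = ∑ i, (n i) • Additive.ofMul (fundSystem F i) := by
      rw [ofMul_prod]
      refine Finset.sum_congr rfl fun i _ => ?_
      rw [ofMul_zpow]
    rw [h1, map_sum]
    refine Finset.sum_congr rfl fun i _ => ?_
    rw [map_zsmul, logEmbedding_fundSystem, ← Int.cast_smul_eq_zsmul ℝ]
    congr 1
    exact ((basisUnitLattice F).ofZLatticeBasis_apply ℝ (unitLattice F) i).symm
  -- nonnegativity
  have hfe0 : (0 : torsion F × (Fin r → ℤ) → ℝ) ≤ fun p => f (e p) := fun p => hf0 _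
  show Summable fun p : torsion F × (Fin r → ℤ) => f (e p)
  refine (summable_prod_of_nonneg hfe0).mpr ⟨fun ζ => ?_, Summable.of_finite⟩
  -- summability in n for fixed ζ
  rcases Nat.eq_zero_or_pos r with hr0 | hr0
  · haveI : IsEmpty (Fin r) := by rw [hr0]; infer_instance
    exact Summable.of_finite
  -- the operator norm bound
  set C := ‖(B.equivFunL.toContinuousLinearMap :
      ({w : InfinitePlace F // w ≠ w₀} → ℝ) →L[ℝ] (Fin r → ℝ))‖ with hC
  have hC0 : 0 ≤ C := norm_nonneg _
  have hCn : ∀ n : Fin r → ℤ,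
      ‖(fun i => (n i : ℝ) : Fin r → ℝ)‖ ≤ (C + 1) * ‖∑ i, (n i : ℝ) • B i‖ := by
    intro n
    have hrepr : B.equivFunL (∑ i, (n i : ℝ) • B i) = fun i => (n i : ℝ) := by
      show B.equivFun _ = _
      rw [Module.Basis.equivFun_apply]
      exact B.repr_sum_self _
    calc ‖(fun i => (n i : ℝ) : Fin r → ℝ)‖
        = ‖B.equivFunL (∑ i, (n i : ℝ) • B i)‖ := by rw [hrepr]
      _ ≤ C * ‖∑ i, (n i : ℝ) • B i‖ :=
          B.equivFunL.toContinuousLinearMap.le_opNorm _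
      _ ≤ (C + 1) * ‖∑ i, (n i : ℝ) • B i‖ := by
          have := norm_nonneg (∑ i, (n i : ℝ) • B i)
          nlinarith
  set a : ℝ := 2 / ((C + 1) * r) with ha
  have ha0 : 0 < a := by
    apply div_pos two_pos
    have : (0:ℝ) < r := by exact_mod_cast hr0
    nlinarith
  refine Summable.of_nonneg_of_le (fun n => hf0 _) (fun n => ?_) (summable_pi_exp_aux r a ha0)
  -- the chain of bounds
  have hsum_le : ∑ i, |(n i : ℝ)| ≤ (C + 1) * r * ‖∑ i, (n i : ℝ) • B i‖ := by
    have h1 : ∑ i, |(n i : ℝ)| ≤ (r : ℝ) * ‖(fun i => (n i : ℝ) : Fin r → ℝ)‖ := by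
      have h2 : ∀ i : Fin r, |(n i : ℝ)| ≤ ‖(fun i => (n i : ℝ) : Fin r → ℝ)‖ := by
        intro i
        have := norm_le_pi_norm (fun i => (n i : ℝ) : Fin r → ℝ) i
        simpa [Real.norm_eq_abs] using this
      calc ∑ i, |(n i : ℝ)| ≤ ∑ _i : Fin r, ‖(fun i => (n i : ℝ) : Fin r → ℝ)‖ :=
            Finset.sum_le_sum fun i _ => h2 i
        _ = (r : ℝ) * ‖(fun i => (n i : ℝ) : Fin r → ℝ)‖ := by
            rw [Finset.sum_const, Finset.card_univ, Fintype.card_fin, nsmul_eq_mul]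
    have h3 := hCn n
    have hrpos : (0:ℝ) < r := by exact_mod_cast hr0
    nlinarith [norm_nonneg (∑ i, (n i : ℝ) • B i)]
  have hchain : -a * ∑ i, |(n i : ℝ)| ≥ -(2 * ‖logEmbedding F (Additive.ofMul (e (ζ, n)))‖) := by
    have he : e (ζ, n) = Φ (ζ, n) := rfl
    rw [he, hlogΦ ζ n]
    have hac : a * ((C + 1) * r) = 2 := by
      rw [ha]
      field_simp
    have hmul := mul_le_mul_of_nonneg_left hsum_le ha0.le
    have h2 : (C + 1) * (r:ℝ) * a = 2 := by rw [mul_comm]; exact hac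
    rw [← mul_assoc, mul_comm a ((C+1) * (r:ℝ)), h2] at hmul
    linarith [hmul]
  calc f (e (ζ, n)) ≤ Real.exp (-(2 * ‖logEmbedding F (Additive.ofMul (e (ζ, n)))‖)) :=
        hbound _
    _ ≤ Real.exp (-a * ∑ i, |(n i : ℝ)|) := Real.exp_le_exp.mpr hchain
end
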